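/- Let K be a closed real subspace of a complex Hilbert space H. Then K ∩ iK = {0} if and only if K' + iK' is dense in H, where K' is the symplectic complement of K. -/

import Mathlib

/-- The symplectic complement of a set `K` in a complex Hilbert space:
`K' = {y : Im⟨y,x⟩ = 0 for all x ∈ K}`. -/
def sympCompl {H : Type*} [NormedAddCommGroup H] [InnerProductSpace ℂ H]
    (K : Set H) : Set H :=
  {y : H | ∀ x ∈ K, (inner ℂ y x : ℂ).im = 0}

/-- For a closed real subspace `K` of a complex Hilbert space,
`K ∩ iK = {0}` if and only if `K' + iK'` is dense in `H`. -/
theorem inter_trivial_iff_sympCompl_sum_dense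
    {H : Type*} [NormedAddCommGroup H] [InnerProductSpace ℂ H] [CompleteSpace H]
    (K : Submodule ℝ H) (hcl : IsClosed (K : Set H)) :
    (∀ x ∈ (K : Set H), ∀ y ∈ (K : Set H), x = Complex.I • y → x = 0)
      ↔ Dense {x : H | ∃ ψ ∈ sympCompl (K : Set H), ∃ φ ∈ sympCompl (K : Set H),
          x = ψ + Complex.I • φ} := by
  letI : InnerProductSpace ℝ H := InnerProductSpace.complexToReal
  -- the multiplication-by-I map as an ℝ-linear map
  set J : H →ₗ[ℝ] H :=
    { toFun := fun x => Complex.I • x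
      map_add' := fun a b => smul_add _ _ _
      map_smul' := fun r x => smul_comm _ _ _ } with hJ
  have hinner : ∀ x y : H, (inner ℝ x y : ℝ) = (inner ℂ x y : ℂ).re := fun x y => rfl
  have hJinner : ∀ x y : H, (inner ℝ (J x) y : ℝ) = (inner ℂ x y : ℂ).im := by
    intro x y
    rw [hinner]
    show ((inner ℂ (Complex.I • x) y : ℂ)).re = _
    rw [inner_smul_left]
    simp [Complex.ext_iff]
  have him : ∀ x y : H, (inner ℂ x y : ℂ).im = -(inner ℂ y x : ℂ).im := by
    intro x y
    rw [← inner_conj_symm x y, Complex.conj_im]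
  -- sympCompl K = (J '' K)ᗮ
  have hsymp : sympCompl (K : Set H) = ((K.map J)ᗮ : Set H) := by
    ext y
    simp only [sympCompl, Set.mem_setOf_eq, SetLike.mem_coe, Submodule.mem_orthogonal,
      Submodule.mem_map]
    constructor
    · rintro h x ⟨z, hz, rfl⟩
      rw [hJinner, him]
      simpa using h z hz
    · intro h x hx
      have := h (J x) ⟨x, hx, rfl⟩
      rw [hJinner, him] at this
      simpa using this
  -- J '' ((K.map J)ᗮ) = Kᗮ
  have hJperp : (K.map J)ᗮ.map J = Kᗮ := by
    ext y
    simp only [Submodule.mem_map, Submodule.mem_orthogonal]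
    constructor
    · rintro ⟨z, hz, rfl⟩ u hu
      have := hz (J u) (Submodule.mem_map_of_mem hu)
      rw [hJinner] at this
      rw [hinner]
      show ((inner ℂ u (Complex.I • z) : ℂ)).re = 0
      rw [inner_smul_right]
      simp [Complex.ext_iff, this]
    · intro h
      refine ⟨(-Complex.I) • y, ?_, ?_⟩
      · rintro x ⟨u, hu, rfl⟩
        rw [hJinner]
        show ((inner ℂ u ((-Complex.I) • y)) : ℂ).im = 0
        rw [inner_smul_right]
        have := h u hu
        rw [hinner] at this
        simp [Complex.ext_iff, this]
      · show Complex.I • (-Complex.I) • y = y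
        rw [smul_smul]; simp
  -- the set in question is the coercion of the submodule sup
  have hset : {x : H | ∃ ψ ∈ sympCompl (K : Set H), ∃ φ ∈ sympCompl (K : Set H),
      x = ψ + Complex.I • φ} = (((K.map J)ᗮ ⊔ Kᗮ : Submodule ℝ H) : Set H) := by
    ext x
    simp only [Set.mem_setOf_eq, SetLike.mem_coe, Submodule.mem_sup, hsymp, SetLike.mem_coe]
    constructor
    · rintro ⟨ψ, hψ, φ, hφ, rfl⟩
      exact ⟨ψ, hψ, Complex.I • φ, hJperp ▸ Submodule.mem_map_of_mem hφ, rfl⟩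
    · rintro ⟨ψ, hψ, z, hz, rfl⟩
      rw [← hJperp] at hz
      obtain ⟨φ, hφ, rfl⟩ := hz
      exact ⟨ψ, hψ, φ, hφ, rfl⟩
  -- K.map J is closed
  have hmapcl : IsClosed ((K.map J : Submodule ℝ H) : Set H) := by
    have : ((K.map J : Submodule ℝ H) : Set H) = (fun y : H => (-Complex.I) • y) ⁻¹' K := by
      ext y
      simp only [Set.mem_preimage, SetLike.mem_coe, Submodule.mem_map]
      constructor
      · rintro ⟨z, hz, rfl⟩
        have : (-Complex.I) • Complex.I • z = z := by rw [smul_smul]; simp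
        show (-Complex.I) • (Complex.I • z) ∈ K
        rwa [this]
      · intro hy
        refine ⟨(-Complex.I) • y, hy, ?_⟩
        show Complex.I • (-Complex.I) • y = y
        rw [smul_smul]; simp
    rw [this]
    exact hcl.preimage (continuous_const_smul _)
  have hKclos : (K : Submodule ℝ H).topologicalClosure = K :=
    SetLike.coe_injective hcl.closure_eq
  have hMclos : (K.map J).topologicalClosure = K.map J :=
    SetLike.coe_injective hmapcl.closure_eq
  rw [hset]
  rw [Submodule.dense_iff_topologicalClosure_eq_top,
    Submodule.topologicalClosure_eq_top_iff, ← Submodule.inf_orthogonal,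
    Submodule.orthogonal_orthogonal_eq_closure, Submodule.orthogonal_orthogonal_eq_closure,
    hKclos, hMclos]
  constructor
  · intro h
    rw [eq_bot_iff]
    rintro x ⟨hx1, hx2⟩
    obtain ⟨y, hy, rfl⟩ := hx1
    exact h _ hx2 y hy rfl
  · intro h x hx y hy hxy
    have : x ∈ (K.map J ⊓ K : Submodule ℝ H) := ⟨⟨y, hy, hxy.symm⟩, hx⟩
    rw [h] at this
    exact this
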